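/- Fix a positive integer m. For all complex q, z with |q| < 1, the sum of z^{|S|} q^{Σ_{s∈S} s} over all finite subsets S of the positive integers satisfying b_S(m−1) = m and b_S(m) = m − 1 equals ((-zq;q)_{m-1}/(q;q)_{m-1}) z^m q^{m(3m-1)/2}. -/

import Mathlib

set_option maxHeartbeats 1000000
open Finset
namespace RankAux

abbrev mkP (n : ℕ) (h : 0 < n) : ℕ+ := ⟨n, h⟩

@[simp] lemma mkP_coe (n : ℕ) (h : 0 < n) : ((mkP n h : ℕ+) : ℕ) = n := rfl

lemma summable_fin_pi {c : ℝ} (hc0 : 0 ≤ c) (hc : c < 1) (k : ℕ) :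
    Summable (fun f : Fin k → ℕ => c ^ (∑ i, f i)) := by
  induction k with
  | zero => exact Summable.of_finite
  | succ n ih =>
      have hgeo : Summable (fun n : ℕ => c ^ n) := summable_geometric_of_lt_one hc0 hc
      have h2 : Summable (fun p : ℕ × (Fin n → ℕ) => c ^ p.1 * c ^ (∑ i, p.2 i)) := by
        apply Summable.mul_of_nonneg hgeo ih <;> intro x <;> positivity
      have h3 := (Equiv.summable_iff ((Fin.consEquiv fun _ => ℕ).symm)
        (f := fun p : ℕ × (Fin n → ℕ) => c ^ p.1 * c ^ (∑ i, p.2 i))).2 h2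
      refine h3.congr fun f => ?_
      simp [Fin.sum_univ_succ, pow_add, Fin.tail]

/-- weight of a finset -/
noncomputable def w (q : ℂ) (U : Finset ℕ+) : ℂ := q ^ (∑ s ∈ U, (s : ℕ))

/-- family of finsets with card `k` and all elements `> m` -/
def A (k m : ℕ) : Set (Finset ℕ+) := {U | U.card = k ∧ ∀ s ∈ U, m < (s : ℕ)}

lemma sum_orderEmbOfFin (U : Finset ℕ+) {k : ℕ} (h : U.card = k) :
    ∑ s ∈ U, (s : ℕ) = ∑ i : Fin k, ((U.orderEmbOfFin h i : ℕ+) : ℕ) := by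
  have hU : U = Finset.image (fun i => U.orderEmbOfFin h i) Finset.univ := by
    apply Finset.coe_injective
    rw [Finset.coe_image, Finset.coe_univ, Set.image_univ, Finset.range_orderEmbOfFin]
  conv_lhs => rw [hU]
  rw [Finset.sum_image (fun a _ b _ hab => (U.orderEmbOfFin h).injective hab)]

lemma summable_w {q : ℂ} (hq : ‖q‖ < 1) (k : ℕ) (s : Set (Finset ℕ+))
    (hs : ∀ U ∈ s, U.card = k) : Summable (fun U : s => w q U) := by
  rw [← summable_norm_iff]
  have base := summable_fin_pi (norm_nonneg q) hq k
  have hinj : Function.Injective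
      (fun U : s => fun i : Fin k => (((U : Finset ℕ+).orderEmbOfFin (hs U U.2) i : ℕ+) : ℕ)) := by
    intro U V hUV
    have hfun : ∀ i, (U : Finset ℕ+).orderEmbOfFin (hs U U.2) i
        = (V : Finset ℕ+).orderEmbOfFin (hs V V.2) i := by
      intro i
      exact PNat.coe_injective (congrFun hUV i)
    have hrange : ((U : Finset ℕ+) : Set ℕ+) = ((V : Finset ℕ+) : Set ℕ+) := by
      rw [← Finset.range_orderEmbOfFin _ (hs U U.2), ← Finset.range_orderEmbOfFin _ (hs V V.2)]
      exact congrArg Set.range (funext hfun)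
    exact Subtype.ext (Finset.coe_injective hrange)
  have := base.comp_injective hinj
  refine this.congr fun U => ?_
  show ‖q‖ ^ _ = ‖w q (U : Finset ℕ+)‖
  rw [w, norm_pow, sum_orderEmbOfFin _ (hs U U.2)]

def shiftEmb : ℕ+ ↪ ℕ+ := ⟨fun s => s + 1, fun a b h => by
  apply PNat.coe_injective
  have := congrArg (fun x : ℕ+ => (x : ℕ)) h
  simpa using this⟩

@[simp] lemma shiftEmb_coe (s : ℕ+) : ((shiftEmb s : ℕ+) : ℕ) = (s : ℕ) + 1 := rfl

lemma image_shift (k m : ℕ) : (fun U : Finset ℕ+ => U.map shiftEmb) '' A k m = A k (m + 1) := by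
  ext V
  constructor
  · rintro ⟨U, ⟨hcard, hmem⟩, rfl⟩
    refine ⟨by simpa using hcard, ?_⟩
    intro t ht
    rw [Finset.mem_map] at ht
    obtain ⟨s, hs, rfl⟩ := ht
    have := hmem s hs
    simp only [shiftEmb_coe]
    omega
  · rintro ⟨hcard, hmem⟩
    refine ⟨V.attach.image (fun t => (mkP ((t.1 : ℕ) - 1) (by have := hmem t.1 t.2; omega))), ⟨?_, ?_⟩, ?_⟩
    · rw [Finset.card_image_of_injOn, Finset.card_attach, hcard]
      intro x _ y _ hxy
      have hx := hmem x.1 x.2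
      have hy := hmem y.1 y.2
      have : (x.1 : ℕ) - 1 = (y.1 : ℕ) - 1 := congrArg (fun z : ℕ+ => (z : ℕ)) hxy
      exact Subtype.ext (PNat.coe_injective (by omega))
    · intro s hs
      rw [Finset.mem_image] at hs
      obtain ⟨t, _, rfl⟩ := hs
      have := hmem t.1 t.2
      simp only [PNat.mk_coe]
      omega
    · ext t
      simp only [Finset.mem_map, Finset.mem_image, Finset.mem_attach]
      constructor
      · rintro ⟨s, ⟨x, -, rfl⟩, rfl⟩
        have := hmem x.1 x.2
        have h2 : ((shiftEmb (mkP ((x.1 : ℕ) - 1) (by omega)) : ℕ+) : ℕ) = (x.1 : ℕ) := by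
          simp only [shiftEmb_coe, PNat.mk_coe]; omega
        rw [PNat.coe_injective h2]
        exact x.2
      · intro ht
        refine ⟨mkP ((t : ℕ) - 1) (by have := hmem t ht; omega), ⟨⟨t, ht⟩, trivial, rfl⟩, ?_⟩
        apply PNat.coe_injective
        have := hmem t ht
        simp only [shiftEmb_coe, PNat.mk_coe]
        omega

def pn (m : ℕ) : ℕ+ := ⟨m + 1, Nat.succ_pos m⟩

@[simp] lemma pn_coe (m : ℕ) : ((pn m : ℕ+) : ℕ) = m + 1 := rfl

lemma A_split (k m : ℕ) :
    A (k + 1) m = ((insert (pn m)) '' A k (m + 1)) ∪ A (k + 1) (m + 1) := by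
  ext U
  constructor
  · rintro ⟨hcard, hmem⟩
    by_cases hp : pn m ∈ U
    · left
      refine ⟨U.erase (pn m), ⟨?_, ?_⟩, ?_⟩
      · rw [Finset.card_erase_of_mem hp, hcard]
        omega
      · intro s hs
        have h1 := hmem s (Finset.mem_of_mem_erase hs)
        have h2 := Finset.ne_of_mem_erase hs
        have h3 : (s : ℕ) ≠ m + 1 := fun h => h2 (PNat.coe_injective (by simp [h]))
        omega
      · exact Finset.insert_erase hp
    · right
      refine ⟨hcard, fun s hs => ?_⟩
      have h1 := hmem s hs
      have h3 : (s : ℕ) ≠ m + 1 := fun h => hp (by rwa [show s = pn m from PNat.coe_injective (by simp [h])] at hs)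
      omega
  · rintro (⟨V, ⟨hcard, hmem⟩, rfl⟩ | ⟨hcard, hmem⟩)
    · have hp : pn m ∉ V := fun h => by have := hmem _ h; simp at this
      refine ⟨by rw [Finset.card_insert_of_notMem hp, hcard], ?_⟩
      intro s hs
      rcases Finset.mem_insert.1 hs with rfl | hs
      · simp
      · have := hmem s hs; omega
    · exact ⟨hcard, fun s hs => by have := hmem s hs; omega⟩

lemma w_map_shift (q : ℂ) (U : Finset ℕ+) :
    w q (U.map shiftEmb) = q ^ U.card * w q U := by
  rw [w, w, Finset.sum_map, ← pow_add]
  congr 1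
  simp only [shiftEmb_coe]
  rw [Finset.sum_add_distrib, Finset.sum_const, smul_eq_mul, mul_one, add_comm]

lemma w_insert (q : ℂ) (m : ℕ) (U : Finset ℕ+) (h : pn m ∉ U) :
    w q (insert (pn m) U) = q ^ (m + 1) * w q U := by
  rw [w, w, Finset.sum_insert h, pow_add, pn_coe]

noncomputable def F (q : ℂ) (k m : ℕ) : ℂ := ∑' U : A k m, w q (U : Finset ℕ+)

lemma F_shift (q : ℂ) (k m : ℕ) : F q k (m + 1) = q ^ k * F q k m := by
  rw [F, ← image_shift, tsum_image _ ((Finset.map_injective shiftEmb).injOn), F, ← tsum_mul_left]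
  apply tsum_congr
  intro U
  rw [w_map_shift, U.2.1]

lemma F_rec {q : ℂ} (hq : ‖q‖ < 1) (k m : ℕ) :
    F q (k + 1) m = q ^ (m + 1) * F q k (m + 1) + F q (k + 1) (m + 1) := by
  have hd : Disjoint ((insert (pn m)) '' A k (m + 1)) (A (k + 1) (m + 1)) := by
    rw [Set.disjoint_left]
    rintro U ⟨V, hV, rfl⟩ ⟨hcard, hmem⟩
    have := hmem (pn m) (Finset.mem_insert_self _ _)
    simp at this
  have hinj : Set.InjOn (insert (pn m)) (A k (m + 1)) := by
    intro V hV V' hV' h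
    have hpV : pn m ∉ V := fun hc => by have := hV.2 _ hc; simp at this
    have hpV' : pn m ∉ V' := fun hc => by have := hV'.2 _ hc; simp at this
    rw [← Finset.erase_insert hpV, ← Finset.erase_insert hpV', h]
  have hs1 : Summable (fun U : ((insert (pn m)) '' A k (m + 1)) => w q (U : Finset ℕ+)) := by
    apply summable_w hq (k + 1)
    rintro U ⟨V, hV, rfl⟩
    rw [Finset.card_insert_of_notMem (fun hc => by have := hV.2 _ hc; simp at this), hV.1]
  have hs2 : Summable (fun U : A (k + 1) (m + 1) => w q (U : Finset ℕ+)) :=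
    summable_w hq (k + 1) _ (fun U hU => hU.1)
  rw [F, A_split, hs1.tsum_union_disjoint (f := fun U => w q U) hd hs2, tsum_image _ hinj]
  congr 1
  rw [F, ← tsum_mul_left]
  apply tsum_congr
  intro V
  exact w_insert q m V (fun hc => by have := V.2.2 _ hc; simp at this)

def e (k m : ℕ) : ℕ := k * m + k * (k + 1) / 2

lemma e_succ (k m : ℕ) : e (k + 1) m = (m + 1) + e k (m + 1) := by
  obtain ⟨b, hb⟩ := Nat.even_mul_succ_self k
  have h1 : k * (k + 1) / 2 = b := by omega
  have h2 : (k + 1) * (k + 1 + 1) / 2 = b + (k + 1) := by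
    have h3 : (k + 1) * (k + 1 + 1) = k * (k + 1) + 2 * (k + 1) := by ring
    omega
  rw [e, e, h1, h2]
  ring

lemma prod_ne_zero {q : ℂ} (hq : ‖q‖ < 1) (k : ℕ) :
    (∏ i ∈ Finset.range k, (1 - q ^ (i + 1))) ≠ 0 := by
  apply Finset.prod_ne_zero_iff.2
  intro i _
  intro h
  have h2 : q ^ (i + 1) = 1 := by linear_combination -h
  have h3 : ‖q ^ (i + 1)‖ < 1 := by
    rw [norm_pow]
    exact pow_lt_one₀ (norm_nonneg q) hq (Nat.succ_ne_zero i)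
  rw [h2] at h3
  simp at h3

lemma F_eq {q : ℂ} (hq : ‖q‖ < 1) (k : ℕ) : ∀ m : ℕ,
    (∏ i ∈ Finset.range k, (1 - q ^ (i + 1))) * F q k m = q ^ (e k m) := by
  induction k with
  | zero =>
      intro m
      have hA : A 0 m = {(∅ : Finset ℕ+)} := by
        ext U
        simp [A, Finset.card_eq_zero]
        intro h
        simp [h]
      rw [F, hA, tsum_singleton]
      simp [w, e]
  | succ k ih =>
      intro m
      have h1 := F_rec hq k m
      have h2 := F_shift q (k + 1) m
      have h3 : (1 - q ^ (k + 1)) * F q (k + 1) m = q ^ (m + 1) * F q k (m + 1) := by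
        rw [h2] at h1
        linear_combination h1
      calc (∏ i ∈ Finset.range (k + 1), (1 - q ^ (i + 1))) * F q (k + 1) m
          = (∏ i ∈ Finset.range k, (1 - q ^ (i + 1))) * ((1 - q ^ (k + 1)) * F q (k + 1) m) := by
            rw [Finset.prod_range_succ]; ring
        _ = q ^ (m + 1) * ((∏ i ∈ Finset.range k, (1 - q ^ (i + 1))) * F q k (m + 1)) := by
            rw [h3]; ring
        _ = q ^ (e (k + 1) m) := by rw [ih (m + 1), e_succ]; ring

lemma F_div {q : ℂ} (hq : ‖q‖ < 1) (k m : ℕ) :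
    F q k m = q ^ (e k m) / ∏ i ∈ Finset.range k, (1 - q ^ (i + 1)) := by
  rw [eq_div_iff (prod_ne_zero hq k)]
  linear_combination F_eq hq k m

lemma e_final (m : ℕ) (hm : 0 < m) : m + e (m - 1) m = m * (3 * m - 1) / 2 := by
  obtain ⟨n, rfl⟩ : ∃ n, m = n + 1 := ⟨m - 1, by omega⟩
  obtain ⟨b, hb⟩ := Nat.even_mul_succ_self n
  simp only [e, Nat.add_sub_cancel]
  have h2 : (n + 1) * (3 * (n + 1) - 1) = 3 * (n * (n + 1)) + 2 * (n + 1) := by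
    have h4 : 3 * (n + 1) - 1 = 3 * n + 2 := by omega
    rw [h4]; ring
  rw [h2, hb]
  omega

lemma finite_part (n : ℕ) (z q : ℂ) :
    (∑ T : Finset (Fin n), z ^ T.card * q ^ (∑ i ∈ T, ((i : ℕ) + 1))) =
      ∏ i ∈ Finset.range n, (1 + z * q ^ (i + 1)) := by
  have h1 : ∀ T : Finset (Fin n), z ^ T.card * q ^ (∑ i ∈ T, ((i : ℕ) + 1)) =
      ∏ i ∈ T, (z * q ^ ((i : ℕ) + 1)) := by
    intro T
    rw [Finset.prod_mul_distrib, Finset.prod_const, Finset.prod_pow_eq_pow_sum]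
  simp_rw [h1]
  rw [← Fin.prod_univ_eq_prod_range (fun i => 1 + z * q ^ (i + 1)) n]
  simp_rw [add_comm (1 : ℂ)]
  rw [Finset.prod_add, ← Finset.powerset_univ]
  apply Finset.sum_congr rfl
  intro T _
  simp

def emb (m : ℕ) : Fin (m - 1) ↪ ℕ+ :=
  ⟨fun i => ⟨(i : ℕ) + 1, Nat.succ_pos _⟩, by
    intro a b h
    have : (a : ℕ) + 1 = (b : ℕ) + 1 := congrArg (fun x : ℕ+ => (x : ℕ)) h
    exact Fin.ext (by omega)⟩

@[simp] lemma emb_coe (m : ℕ) (i : Fin (m - 1)) : ((emb m i : ℕ+) : ℕ) = (i : ℕ) + 1 := rfl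

lemma emb_lt (m : ℕ) (i : Fin (m - 1)) : ((emb m i : ℕ+) : ℕ) < m := by
  have := i.2
  simp only [emb_coe]
  omega

def mkS (m : ℕ) (hm : 0 < m) (T : Finset (Fin (m - 1))) (U : Finset ℕ+) : Finset ℕ+ :=
  (T.map (emb m)) ∪ insert (mkP m hm) U

lemma mem_mkS (m : ℕ) (hm : 0 < m) (T : Finset (Fin (m - 1))) (U : Finset ℕ+) (s : ℕ+) :
    s ∈ mkS m hm T U ↔ (∃ i ∈ T, emb m i = s) ∨ s = (mkP m hm) ∨ s ∈ U := by
  simp only [mkS, Finset.mem_union, Finset.mem_map, Finset.mem_insert]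

lemma mkS_filter_big (m : ℕ) (hm : 0 < m) (T : Finset (Fin (m - 1))) {U : Finset ℕ+}
    (hU : U ∈ A (m - 1) m) :
    (mkS m hm T U).filter (fun s : ℕ+ => m < (s : ℕ)) = U := by
  ext s
  rw [Finset.mem_filter, mem_mkS]
  constructor
  · rintro ⟨(⟨i, _, rfl⟩ | rfl | hs), hlt⟩
    · exact absurd hlt (by have := emb_lt m i; omega)
    · simp at hlt
    · exact hs
  · intro hs
    exact ⟨Or.inr (Or.inr hs), hU.2 s hs⟩

lemma p_not_mem {m : ℕ} (hm : 0 < m) {U : Finset ℕ+} (hU : U ∈ A (m - 1) m) :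
    ((mkP m hm) : ℕ+) ∉ U := fun h => by have := hU.2 _ h; simp at this

lemma mkS_filter_mid (m : ℕ) (hm : 0 < m) (T : Finset (Fin (m - 1))) {U : Finset ℕ+}
    (hU : U ∈ A (m - 1) m) :
    (mkS m hm T U).filter (fun s : ℕ+ => m - 1 < (s : ℕ)) = insert (mkP m hm) U := by
  ext s
  rw [Finset.mem_filter, mem_mkS, Finset.mem_insert]
  constructor
  · rintro ⟨(⟨i, _, rfl⟩ | rfl | hs), hlt⟩
    · have := i.2
      simp only [emb_coe] at hlt
      omega
    · exact Or.inl rfl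
    · exact Or.inr hs
  · rintro (rfl | hs)
    · exact ⟨Or.inr (Or.inl rfl), by simp; omega⟩
    · exact ⟨Or.inr (Or.inr hs), by have := hU.2 s hs; omega⟩

lemma mkS_cond (m : ℕ) (hm : 0 < m) (T : Finset (Fin (m - 1))) {U : Finset ℕ+}
    (hU : U ∈ A (m - 1) m) :
    ((mkS m hm T U).filter (fun s : ℕ+ => m - 1 < (s : ℕ))).card = m ∧
    ((mkS m hm T U).filter (fun s : ℕ+ => m < (s : ℕ))).card = m - 1 := by
  rw [mkS_filter_mid m hm T hU, mkS_filter_big m hm T hU]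
  rw [Finset.card_insert_of_notMem (p_not_mem hm hU), hU.1]
  omega

lemma mkS_disjoint (m : ℕ) (hm : 0 < m) (T : Finset (Fin (m - 1))) {U : Finset ℕ+}
    (hU : U ∈ A (m - 1) m) :
    Disjoint (T.map (emb m)) (insert ((mkP m hm) : ℕ+) U) := by
  rw [Finset.disjoint_left]
  intro s hs hs'
  rw [Finset.mem_map] at hs
  obtain ⟨i, _, rfl⟩ := hs
  rcases Finset.mem_insert.1 hs' with h | h
  · have := emb_lt m i
    rw [h] at this
    simp at this
  · have := hU.2 _ h
    have := emb_lt m i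
    omega

lemma mkS_card (m : ℕ) (hm : 0 < m) (T : Finset (Fin (m - 1))) {U : Finset ℕ+}
    (hU : U ∈ A (m - 1) m) : (mkS m hm T U).card = T.card + m := by
  rw [mkS, Finset.card_union_of_disjoint (mkS_disjoint m hm T hU), Finset.card_map,
    Finset.card_insert_of_notMem (p_not_mem hm hU), hU.1]
  omega

lemma mkS_sum (m : ℕ) (hm : 0 < m) (T : Finset (Fin (m - 1))) {U : Finset ℕ+}
    (hU : U ∈ A (m - 1) m) :
    (∑ s ∈ mkS m hm T U, (s : ℕ)) = (∑ i ∈ T, ((i : ℕ) + 1)) + (m + ∑ s ∈ U, (s : ℕ)) := by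
  rw [mkS, Finset.sum_union (mkS_disjoint m hm T hU), Finset.sum_map]
  rw [Finset.sum_insert (f := fun s : ℕ+ => (s : ℕ)) (p_not_mem hm hU)]
  rfl

lemma p_mem_of_cond (m : ℕ) (hm : 0 < m) (S : Finset ℕ+)
    (h1 : (S.filter (fun s : ℕ+ => m - 1 < (s : ℕ))).card = m)
    (h2 : (S.filter (fun s : ℕ+ => m < (s : ℕ))).card = m - 1) :
    ((mkP m hm) : ℕ+) ∈ S := by
  set S' := S.filter (fun s : ℕ+ => m - 1 < (s : ℕ)) with hS'
  have key := Finset.card_filter_add_card_filter_not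
    (s := S') (p := fun s : ℕ+ => m < (s : ℕ))
  have hff : S'.filter (fun s : ℕ+ => m < (s : ℕ)) = S.filter (fun s : ℕ+ => m < (s : ℕ)) := by
    ext s
    simp only [hS', Finset.mem_filter]
    constructor
    · rintro ⟨⟨hs, _⟩, h⟩; exact ⟨hs, h⟩
    · rintro ⟨hs, h⟩; exact ⟨⟨hs, by omega⟩, h⟩
  rw [hff, h2, h1] at key
  have hcard1 : (S'.filter (fun s : ℕ+ => ¬ m < (s : ℕ))).card = 1 := by omega
  obtain ⟨a, ha⟩ := Finset.card_eq_one.1 hcard1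
  have haS : a ∈ S'.filter (fun s : ℕ+ => ¬ m < (s : ℕ)) := ha ▸ Finset.mem_singleton_self a
  rw [Finset.mem_filter] at haS
  obtain ⟨haS', hale⟩ := haS
  rw [hS', Finset.mem_filter] at haS'
  obtain ⟨haS, hagt⟩ := haS'
  have : a = ((mkP m hm) : ℕ+) := PNat.coe_injective (by simp; omega)
  rwa [← this]

def cond (m : ℕ) (S : Finset ℕ+) : Prop :=
  (S.filter (fun s : ℕ+ => m - 1 < (s : ℕ))).card = m ∧
  (S.filter (fun s : ℕ+ => m < (s : ℕ))).card = m - 1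

noncomputable def mainEquiv (m : ℕ) (hm : 0 < m) :
    (Finset (Fin (m - 1)) × ↥(A (m - 1) m)) ≃ {S : Finset ℕ+ // cond m S} where
  toFun := fun x => ⟨mkS m hm x.1 x.2, mkS_cond m hm x.1 x.2.2⟩
  invFun := fun S =>
    (Finset.univ.filter (fun i => emb m i ∈ S.1),
     ⟨S.1.filter (fun s : ℕ+ => m < (s : ℕ)), S.2.2,
      fun s hs => (Finset.mem_filter.1 hs).2⟩)
  left_inv := by
    rintro ⟨T, U, hU⟩
    have hUA : U ∈ A (m - 1) m := hU
    refine Prod.ext ?_ (Subtype.ext ?_)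
    · ext i
      simp only [Finset.mem_filter, Finset.mem_univ, true_and]
      rw [mem_mkS]
      constructor
      · rintro (⟨j, hj, hji⟩ | h | h)
        · rwa [← (emb m).injective hji]
        · exact absurd (congrArg (fun x : ℕ+ => (x : ℕ)) h)
            (by simp only [emb_coe, PNat.mk_coe]; have := i.2; omega)
        · have := hUA.2 _ h
          have := emb_lt m i
          omega
      · intro hi
        exact Or.inl ⟨i, hi, rfl⟩
    · exact mkS_filter_big m hm T hUA
  right_inv := by
    rintro ⟨S, h1, h2⟩
    simp only [Subtype.mk.injEq]
    have hp : ((mkP m hm) : ℕ+) ∈ S := p_mem_of_cond m hm S h1 h2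
    ext s
    rw [mem_mkS]
    constructor
    · rintro (⟨i, hi, rfl⟩ | rfl | hs)
      · exact (Finset.mem_filter.1 hi).2
      · exact hp
      · exact (Finset.mem_filter.1 hs).1
    · intro hs
      rcases lt_trichotomy ((s : ℕ)) m with h | h | h
      · refine Or.inl ⟨⟨(s : ℕ) - 1, by have := s.pos; omega⟩, ?_, ?_⟩
        · rw [Finset.mem_filter]
          refine ⟨Finset.mem_univ _, ?_⟩
          have hes : emb m ⟨(s : ℕ) - 1, by have := s.pos; omega⟩ = s := by
            apply PNat.coe_injective
            simp only [emb_coe]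
            have := s.pos
            omega
          rwa [hes]
        · apply PNat.coe_injective
          simp only [emb_coe]
          have := s.pos
          omega
      · exact Or.inr (Or.inl (PNat.coe_injective (by simpa using h)))
      · exact Or.inr (Or.inr (Finset.mem_filter.2 ⟨hs, h⟩))

theorem main_aux (m : ℕ) (hm : 0 < m) (q z : ℂ) (hq' : ‖q‖ < 1) :
    (∑' S : {S : Finset ℕ+ // cond m S},
      z ^ (S : Finset ℕ+).card * q ^ (∑ s ∈ (S : Finset ℕ+), (s : ℕ))) =
    ((∏ i ∈ Finset.range (m - 1), (1 + z * q ^ (i + 1))) /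
        (∏ i ∈ Finset.range (m - 1), (1 - q ^ (i + 1)))) *
      z ^ m * q ^ (m * (3 * m - 1) / 2) := by
  classical
  have key := (mainEquiv m hm).tsum_eq
    (fun S : {S : Finset ℕ+ // cond m S} =>
      z ^ (S : Finset ℕ+).card * q ^ (∑ s ∈ (S : Finset ℕ+), (s : ℕ)))
  rw [← key]
  have hfx : ∀ x : Finset (Fin (m - 1)) × ↥(A (m - 1) m),
      z ^ ((mainEquiv m hm x : Finset ℕ+)).card *
        q ^ (∑ s ∈ (mainEquiv m hm x : Finset ℕ+), (s : ℕ)) =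
      (z ^ x.1.card * q ^ (∑ i ∈ x.1, ((i : ℕ) + 1))) *
        ((z ^ m * q ^ m) * w q (x.2 : Finset ℕ+)) := by
    intro x
    have hc : ((mainEquiv m hm x : Finset ℕ+)).card = x.1.card + m := mkS_card m hm x.1 x.2.2
    have hs : (∑ s ∈ (mainEquiv m hm x : Finset ℕ+), (s : ℕ)) =
        (∑ i ∈ x.1, ((i : ℕ) + 1)) + (m + ∑ s ∈ (x.2 : Finset ℕ+), (s : ℕ)) :=
      mkS_sum m hm x.1 x.2.2
    rw [hc, hs, w, pow_add, pow_add, pow_add]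
    ring
  rw [tsum_congr hfx]
  have hsum : Summable (fun U : A (m - 1) m => w q (U : Finset ℕ+)) :=
    summable_w hq' (m - 1) _ (fun U hU => hU.1)
  have hf : Summable (fun T : Finset (Fin (m - 1)) =>
      ‖z ^ T.card * q ^ (∑ i ∈ T, ((i : ℕ) + 1))‖) := Summable.of_finite
  have hg : Summable (fun U : A (m - 1) m => ‖(z ^ m * q ^ m) * w q (U : Finset ℕ+)‖) := by
    have := (summable_norm_iff.2 hsum).mul_left ‖z ^ m * q ^ m‖
    refine this.congr fun U => ?_
    simp [norm_mul]
  rw [← tsum_mul_tsum_of_summable_norm hf hg]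
  rw [tsum_fintype, finite_part, tsum_mul_left]
  rw [show (∑' (x : ↑(A (m - 1) m)), w q (x : Finset ℕ+)) = F q (m - 1) m from rfl]
  rw [F_div hq' (m - 1) m]
  have hP := prod_ne_zero hq' (m - 1)
  have hqexp : q ^ m * q ^ (e (m - 1) m) = q ^ (m * (3 * m - 1) / 2) := by
    rw [← pow_add, e_final m hm]
  field_simp
  linear_combination (∏ i ∈ Finset.range (m - 1), (1 + z * q ^ (i + 1))) * z ^ m * hqexp

end RankAux

/-- Generating function for rank-`m` tilings with `b(m-1) = m` and `b(m) = m-1`: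
the sum of `z^|S| q^(Σ_{s∈S} s)` over such finite subsets `S` of `ℤ_{>0}` is
`((-zq;q)_{m-1}/(q;q)_{m-1}) z^m q^{m(3m-1)/2}`. -/
theorem rank_m_case_two_generating_function (m : ℕ) (hm : 0 < m)
    (q z : ℂ) (hq : ‖q‖ < 1) :
    (∑' S : {S : Finset ℕ+ //
        (S.filter (fun s : ℕ+ => m - 1 < (s : ℕ))).card = m ∧
        (S.filter (fun s : ℕ+ => m < (s : ℕ))).card = m - 1},
      z ^ (S : Finset ℕ+).card * q ^ (∑ s ∈ (S : Finset ℕ+), (s : ℕ))) =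
    ((∏ i ∈ Finset.range (m - 1), (1 + z * q ^ (i + 1))) /
        (∏ i ∈ Finset.range (m - 1), (1 - q ^ (i + 1)))) *
      z ^ m * q ^ (m * (3 * m - 1) / 2) := by
  exact RankAux.main_aux m hm q z hq
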